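/- Let Δ ∈ (0,1) and ι_Δ as above. Then the second derivative of ι_Δ at x equals −(Δ²/(1−Δ²)) |x|^{-1} ẑ ⊗ x̂⊥ ⊗ x̂⊥, where z = ι_Δ(x). -/

import Mathlib

open MeasureTheory Metric

noncomputable section

abbrev E2 : Type := EuclideanSpace ℝ (Fin 2)

def e2 (i : Fin 2) : E2 := EuclideanSpace.single i (1 : ℝ)

/-- The angular coordinate `φ(x) ∈ (−π, π]` of `x ∈ ℝ²`. -/
noncomputable def ang (x : E2) : ℝ := Complex.arg (x 0 + x 1 * Complex.I)

/-- The negative real axis `ℝ₋ = {(x₁,0) : x₁ ≤ 0}`. -/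
def negAxis : Set E2 := {x : E2 | x 1 = 0 ∧ x 0 ≤ 0}

/-- The map `ι_Δ(x) = (|x| cos(φ(x)/√(1−Δ²)), |x| sin(φ(x)/√(1−Δ²)))`. -/
noncomputable def iota (Δ : ℝ) (x : E2) : E2 :=
  (WithLp.equiv 2 (Fin 2 → ℝ)).symm
    ![‖x‖ * Real.cos (ang x / Real.sqrt (1 - Δ ^ 2)),
      ‖x‖ * Real.sin (ang x / Real.sqrt (1 - Δ ^ 2))]

/-- Components of `ŵ = w/|w|`. -/
noncomputable def hat (w : E2) (i : Fin 2) : ℝ := w i / ‖w‖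

/-- Components of `ŵ⊥ = (−w₂, w₁)/|w|`. -/
noncomputable def perpHat (w : E2) (i : Fin 2) : ℝ :=
  (if i = 0 then -(w 1) else w 0) / ‖w‖

/-! ### Auxiliary machinery -/

/-- The real-linear map `w ↦ w.re + c * w.im * I`. -/
noncomputable def Lc (c : ℝ) : ℂ →L[ℝ] ℂ :=
  Complex.ofRealCLM.comp Complex.reCLM + Complex.imCLM.smulRight (c * Complex.I)

lemma Lc_apply (c : ℝ) (w : ℂ) : Lc c w = w.re + c * w.im * Complex.I := by
  simp [Lc, Complex.real_smul]; ring

/-- Identification `E2 → ℂ`. -/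
noncomputable def chi : E2 →L[ℝ] ℂ :=
  Complex.ofRealCLM.comp (EuclideanSpace.proj 0) +
    (EuclideanSpace.proj (1 : Fin 2)).smulRight Complex.I

lemma chi_apply (x : E2) : chi x = (x 0 : ℂ) + (x 1 : ℂ) * Complex.I := by
  simp [chi, Complex.real_smul]

/-- Identification `ℂ → E2`. -/
noncomputable def psi : ℂ →L[ℝ] E2 :=
  Complex.reCLM.smulRight (e2 0) + Complex.imCLM.smulRight (e2 1)

lemma psi_apply (w : ℂ) (k : Fin 2) : psi w k = ![w.re, w.im] k := by
  fin_cases k <;>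
    simp [psi, e2, EuclideanSpace.single_apply, PiLp.add_apply, PiLp.smul_apply]

/-- The function `z ↦ exp(Lc c (log z))`, equal to `|z| e^{i c arg z}` away from `0`. -/
noncomputable def Fc (c : ℝ) (z : ℂ) : ℂ := Complex.exp (Lc c (Complex.log z))

/-- Multiplication by a fixed complex number as a real-linear CLM. -/
noncomputable def mulC (a : ℂ) : ℂ →L[ℝ] ℂ := a • (1 : ℂ →L[ℝ] ℂ)

lemma mulC_apply (a v : ℂ) : mulC a v = a * v := by
  simp [mulC]

lemma Fc_eq {c : ℝ} {z : ℂ} (hz : z ≠ 0) :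
    Fc c z = (‖z‖ : ℂ) * Complex.exp ((c * z.arg : ℝ) * Complex.I) := by
  rw [Fc, Lc_apply, Complex.log_re, Complex.log_im, Complex.exp_add,
    ← Complex.ofReal_exp, Real.exp_log (norm_pos_iff.mpr hz)]
  push_cast
  ring_nf

lemma abs_chi (x : E2) : ‖chi x‖ = ‖x‖ := by
  rw [chi_apply, Complex.norm_def, Complex.normSq_add_mul_I, EuclideanSpace.norm_eq]
  simp [Fin.sum_univ_two, sq]

lemma ang_eq (x : E2) : ang x = (chi x).arg := by rw [chi_apply]; rfl

lemma chi_ne_zero {x : E2} (hx : x ∉ negAxis) : chi x ∈ Complex.slitPlane := by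
  rw [Complex.mem_slitPlane_iff, chi_apply]
  simp only [Complex.add_re, Complex.ofReal_re, Complex.mul_re, Complex.I_re,
    Complex.ofReal_im, Complex.I_im, Complex.add_im, Complex.mul_im]
  by_contra h
  push_neg at h
  exact hx ⟨by simpa using h.2, by simpa using h.1⟩

lemma iota_eq {Δ : ℝ} {y : E2} (hy : chi y ∈ Complex.slitPlane) :
    iota Δ y = psi (Fc (Real.sqrt (1 - Δ ^ 2))⁻¹ (chi y)) := by
  have hz : chi y ≠ 0 := Complex.slitPlane_ne_zero hy
  have hre : (Fc (Real.sqrt (1 - Δ ^ 2))⁻¹ (chi y)).re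
      = ‖chi y‖ * Real.cos ((Real.sqrt (1 - Δ ^ 2))⁻¹ * (chi y).arg) := by
    rw [Fc_eq hz, Complex.re_ofReal_mul, Complex.exp_ofReal_mul_I_re]
  have him : (Fc (Real.sqrt (1 - Δ ^ 2))⁻¹ (chi y)).im
      = ‖chi y‖ * Real.sin ((Real.sqrt (1 - Δ ^ 2))⁻¹ * (chi y).arg) := by
    rw [Fc_eq hz, Complex.im_ofReal_mul, Complex.exp_ofReal_mul_I_im]
  ext k
  rw [psi_apply]
  fin_cases k
  · show ‖y‖ * Real.cos (ang y / Real.sqrt (1 - Δ ^ 2)) = _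
    simp only [Matrix.cons_val_zero]
    rw [hre, abs_chi, ← ang_eq, div_eq_inv_mul]
    rfl
  · show ‖y‖ * Real.sin (ang y / Real.sqrt (1 - Δ ^ 2)) = _
    simp only [Matrix.cons_val_one, Matrix.head_cons]
    rw [him, abs_chi, ← ang_eq, div_eq_inv_mul]
    rfl

lemma hasFDerivAt_Fc {c : ℝ} {z : ℂ} (hz : z ∈ Complex.slitPlane) :
    HasFDerivAt (Fc c) ((mulC (Fc c z)).comp ((Lc c).comp (mulC z⁻¹))) z := by
  have h1 : HasFDerivAt Complex.log (mulC z⁻¹) z := by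
    have h := (Complex.hasDerivAt_log hz).hasFDerivAt.restrictScalars ℝ
    refine h.congr_fderiv ?_
    refine ContinuousLinearMap.ext fun v => ?_
    simp [mulC, mul_comm]
  have h3 : HasFDerivAt Complex.exp (mulC (Complex.exp (Lc c (Complex.log z))))
      (Lc c (Complex.log z)) := by
    have h := (Complex.hasDerivAt_exp (Lc c (Complex.log z))).hasFDerivAt.restrictScalars ℝ
    refine h.congr_fderiv ?_
    refine ContinuousLinearMap.ext fun v => ?_
    simp [mulC, mul_comm]
  exact h3.comp z (((Lc c).hasFDerivAt).comp z h1)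

lemma hasFDerivAt_iota {Δ : ℝ} {y : E2} (hy : chi y ∈ Complex.slitPlane) :
    HasFDerivAt (iota Δ)
      (psi.comp (((mulC (Fc (Real.sqrt (1 - Δ ^ 2))⁻¹ (chi y))).comp
        ((Lc (Real.sqrt (1 - Δ ^ 2))⁻¹).comp (mulC (chi y)⁻¹))).comp chi)) y := by
  have h := psi.hasFDerivAt.comp y
    ((hasFDerivAt_Fc (c := (Real.sqrt (1 - Δ ^ 2))⁻¹) hy).comp y chi.hasFDerivAt)
  refine h.congr_of_eventuallyEq ?_
  have hU : IsOpen (chi ⁻¹' Complex.slitPlane) :=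
    Complex.isOpen_slitPlane.preimage chi.continuous
  filter_upwards [hU.mem_nhds hy] with z hz
  exact iota_eq hz

lemma fderiv_iota_apply {Δ : ℝ} {y : E2} (hy : chi y ∈ Complex.slitPlane) (v : E2) :
    fderiv ℝ (iota Δ) y v
      = psi (Fc (Real.sqrt (1 - Δ ^ 2))⁻¹ (chi y)
          * Lc (Real.sqrt (1 - Δ ^ 2))⁻¹ ((chi y)⁻¹ * chi v)) := by
  rw [(hasFDerivAt_iota hy).fderiv]
  simp [mulC_apply]

lemma Lc_mul_sub (c : ℝ) (a b : ℂ) :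
    Lc c a * Lc c b - Lc c (a * b) = (((1 - c ^ 2) * (a.im * b.im) : ℝ) : ℂ) := by
  rw [Lc_apply, Lc_apply, Lc_apply]
  apply Complex.ext <;>
  · simp only [Complex.add_re, Complex.add_im, Complex.mul_re, Complex.mul_im,
      Complex.sub_re, Complex.sub_im, Complex.ofReal_re, Complex.ofReal_im,
      Complex.I_re, Complex.I_im]
    ring

lemma norm_iota {Δ : ℝ} (x : E2) : ‖iota Δ x‖ = ‖x‖ := by
  rw [EuclideanSpace.norm_eq]
  have h0 : iota Δ x 0 = ‖x‖ * Real.cos (ang x / Real.sqrt (1 - Δ ^ 2)) := rfl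
  have h1 : iota Δ x 1 = ‖x‖ * Real.sin (ang x / Real.sqrt (1 - Δ ^ 2)) := rfl
  rw [Fin.sum_univ_two, h0, h1, Real.norm_eq_abs, Real.norm_eq_abs, sq_abs, sq_abs,
    mul_pow, mul_pow, ← mul_add, Real.cos_sq_add_sin_sq, mul_one,
    Real.sqrt_sq (norm_nonneg x)]


/-- The second derivative of `ι_Δ` at `x ∉ ℝ₋` equals
`−(Δ²/(1−Δ²)) |x|⁻¹ ẑ ⊗ x̂⊥ ⊗ x̂⊥` with `z = ι_Δ(x)`. -/
theorem stmt15 (Δ : ℝ) (hΔ : Δ ∈ Set.Ioo (0 : ℝ) 1) (x : E2) (hx : x ∉ negAxis)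
    (k i j : Fin 2) :
    (fderiv ℝ (fun z => fderiv ℝ (iota Δ) z (e2 i)) x (e2 j)) k
      = -(Δ ^ 2 / (1 - Δ ^ 2)) * ‖x‖⁻¹
          * hat (iota Δ x) k * perpHat x i * perpHat x j := by
  obtain ⟨hΔ0, hΔ1⟩ := hΔ
  have h1Δ : (0 : ℝ) < 1 - Δ ^ 2 := by nlinarith
  set c : ℝ := (Real.sqrt (1 - Δ ^ 2))⁻¹ with hc
  have hc2 : c ^ 2 = (1 - Δ ^ 2)⁻¹ := by
    rw [hc, ← Real.sqrt_inv, Real.sq_sqrt (by positivity)]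
  have hxs : chi x ∈ Complex.slitPlane := chi_ne_zero hx
  set w : ℂ := chi x with hw
  have hw0 : w ≠ 0 := Complex.slitPlane_ne_zero hxs
  set vi : ℂ := chi (e2 i) with hvi
  set vj : ℂ := chi (e2 j) with hvj
  -- the inner function agrees with an explicit one near x
  have hU : IsOpen (chi ⁻¹' Complex.slitPlane) :=
    Complex.isOpen_slitPlane.preimage chi.continuous
  have hG : (fun z => fderiv ℝ (iota Δ) z (e2 i))
      =ᶠ[nhds x] (fun z => psi (Fc c (chi z) * Lc c ((chi z)⁻¹ * vi))) := by
    filter_upwards [hU.mem_nhds hxs] with z hz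
    exact fderiv_iota_apply hz (e2 i)
  -- derivative of the explicit function
  have hinner : HasFDerivAt (fun ww : ℂ => (Lc c) (ww⁻¹ * vi))
      ((Lc c).comp (mulC (-(w ^ 2)⁻¹ * vi))) w := by
    have h := ((hasDerivAt_inv hw0).mul_const vi).hasFDerivAt.restrictScalars ℝ
    have h2 : HasFDerivAt (fun ww : ℂ => ww⁻¹ * vi) (mulC (-(w ^ 2)⁻¹ * vi)) w := by
      refine h.congr_fderiv ?_
      refine ContinuousLinearMap.ext fun v => ?_
      simp [mulC, mul_comm]
    exact ((Lc c).hasFDerivAt).comp w h2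
  have hF : HasFDerivAt (Fc c) ((mulC (Fc c w)).comp ((Lc c).comp (mulC w⁻¹))) w :=
    hasFDerivAt_Fc hxs
  have hmul := hF.mul hinner
  have hcomp := psi.hasFDerivAt.comp x (hmul.comp x chi.hasFDerivAt)
  have hfinal := (hcomp.congr_of_eventuallyEq hG).fderiv
  rw [hfinal]
  -- evaluate
  have heval : (psi.comp (((Fc c w • (Lc c).comp (mulC (-(w ^ 2)⁻¹ * vi))
      + Lc c (w⁻¹ * vi) • (mulC (Fc c w)).comp ((Lc c).comp (mulC w⁻¹)))).comp chi)) (e2 j) k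
      = psi (Fc c w • Lc c (-(w ^ 2)⁻¹ * vi * vj)
          + Lc c (w⁻¹ * vi) • (Fc c w * Lc c (w⁻¹ * vj))) k := by
    simp [mulC_apply]
    rfl
  rw [heval]
  -- algebra inside psi
  have key : Fc c w • Lc c (-(w ^ 2)⁻¹ * vi * vj)
      + Lc c (w⁻¹ * vi) • (Fc c w * Lc c (w⁻¹ * vj))
      = (((1 - c ^ 2) * ((w⁻¹ * vj).im * (w⁻¹ * vi).im) : ℝ) : ℂ) * Fc c w := by
    have harg : -(w ^ 2)⁻¹ * vi * vj = -((w⁻¹ * vj) * (w⁻¹ * vi)) := by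
      field_simp
    rw [harg, map_neg]
    rw [smul_eq_mul, smul_eq_mul]
    rw [← Lc_mul_sub c (w⁻¹ * vj) (w⁻¹ * vi)]
    ring
  rw [key]
  -- component extraction
  have hpsi_mul : ∀ (r : ℝ) (z : ℂ) (k : Fin 2), psi ((r : ℂ) * z) k = r * psi z k := by
    intro r z k
    rw [psi_apply, psi_apply]
    fin_cases k <;> simp [Complex.mul_re, Complex.mul_im]
  rw [hpsi_mul]
  have hiota : psi (Fc c w) k = iota Δ x k := by
    rw [iota_eq hxs]
  rw [hiota]
  -- the imaginary parts are perpHat components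
  have hnx : ‖x‖ ≠ 0 := by
    intro h
    apply hx
    have : x = 0 := norm_eq_zero.mp h
    rw [this]
    exact ⟨rfl, le_refl 0⟩
  have hnormSq : Complex.normSq w = ‖x‖ ^ 2 := by
    rw [← Complex.sq_norm, abs_chi]
  have him : ∀ l : Fin 2, (w⁻¹ * chi (e2 l)).im = perpHat x l / ‖x‖ := by
    intro l
    have hre : w.re = x 0 := by rw [hw, chi_apply]; simp
    have him' : w.im = x 1 := by rw [hw, chi_apply]; simp
    fin_cases l
    · have h1 : chi (e2 0) = 1 := by
        rw [chi_apply]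
        simp [e2, EuclideanSpace.single_apply]
      rw [show ((⟨0, by norm_num⟩ : Fin 2)) = (0 : Fin 2) from rfl, h1, mul_one,
        Complex.inv_im, hnormSq, him']
      simp [perpHat, div_div, sq]
    · have h1 : chi (e2 1) = Complex.I := by
        rw [chi_apply]
        simp [e2, EuclideanSpace.single_apply]
      rw [show ((⟨1, by norm_num⟩ : Fin 2)) = (1 : Fin 2) from rfl, h1, Complex.mul_I_im,
        Complex.inv_re, hnormSq, hre]
      simp [perpHat, div_div, sq]
  rw [him i, him j]
  -- final arithmetic
  rw [hat, norm_iota]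
  have h1 : (1 : ℝ) - c ^ 2 = -(Δ ^ 2 / (1 - Δ ^ 2)) := by
    rw [hc2]
    field_simp
    ring
  rw [h1]
  field_simp
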